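/- Let T ⊆ ℝ with a := inf T ∈ T, let F : T → c(M) satisfy V⁺(F,T) < +∞, and let t₀ ∈ T, X₀ ∈ c(M). Then there exists a set-valued selector Γ : T → c(M) of F (i.e., Γ(t) ⊆ F(t) for all t ∈ T) of bounded Jordan variation such that d_H(X₀, Γ(t₀)) ≤ e(X₀, F(t₀)), V(Γ, T∩[a,t₀)) ≤ V⁺(F, T∩[a,t₀)), and V(Γ, T∩[t₀,+∞)) ≤ V⁺(F, T∩[t₀,+∞)). In particular, if X₀ ⊆ F(t₀) then Γ(t₀) = X₀. -/

import Mathlib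

open Set Metric EMetric Filter
open scoped ENNReal Pointwise

noncomputable def exc {M : Type*} [MetricSpace M] (X Y : Set M) : ℝ≥0∞ :=
  ⨆ x ∈ X, EMetric.infEdist x Y

noncomputable def varBy {M : Type*} [MetricSpace M]
    (D : Set M → Set M → ℝ≥0∞) (F : ℝ → Set M) (T : Set ℝ) : ℝ≥0∞ :=
  ⨆ p : {p : ℕ × (ℕ → ℝ) // Monotone p.2 ∧ ∀ i, p.2 i ∈ T},
    ∑ i ∈ Finset.range p.1.1, D (F (p.1.2 i)) (F (p.1.2 (i + 1)))

noncomputable def varPlus {M : Type*} [MetricSpace M] (F : ℝ → Set M) (T : Set ℝ) : ℝ≥0∞ :=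
  varBy exc F T

noncomputable def varMinus {M : Type*} [MetricSpace M] (F : ℝ → Set M) (T : Set ℝ) : ℝ≥0∞ :=
  varBy (fun X Y => exc Y X) F T

noncomputable def varH {M : Type*} [MetricSpace M] (F : ℝ → Set M) (T : Set ℝ) : ℝ≥0∞ :=
  varBy EMetric.hausdorffEdist F T

section Basic
variable {M : Type*} [MetricSpace M]

lemma exc_self (S : Set M) : exc S S = 0 := by
  refine le_antisymm (iSup₂_le fun x hx => le_of_eq (EMetric.infEdist_zero_of_mem hx)) zero_le

lemma le_exc {x : M} {X Y : Set M} (hx : x ∈ X) : EMetric.infEdist x Y ≤ exc X Y :=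
  le_iSup₂ (f := fun x _ => EMetric.infEdist x Y) x hx

lemma exc_le_iff {X Y : Set M} {c : ℝ≥0∞} : exc X Y ≤ c ↔ ∀ x ∈ X, EMetric.infEdist x Y ≤ c :=
  iSup₂_le_iff

lemma exc_le_hausdorffEdist (X Y : Set M) : exc X Y ≤ EMetric.hausdorffEdist X Y :=
  exc_le_iff.2 fun _ hx => EMetric.infEdist_le_hausdorffEdist_of_mem hx

lemma varBy_mono (D : Set M → Set M → ℝ≥0∞) (G : ℝ → Set M) {S S' : Set ℝ} (h : S ⊆ S') :
    varBy D G S ≤ varBy D G S' :=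
  iSup_le fun p => le_iSup_of_le ⟨p.1, p.2.1, fun i => h (p.2.2 i)⟩ le_rfl

lemma sum_le_varBy (D : Set M → Set M → ℝ≥0∞) (G : ℝ → Set M) {S : Set ℝ} {n : ℕ} {u : ℕ → ℝ}
    (hu : Monotone u) (huS : ∀ i, u i ∈ S) :
    ∑ i ∈ Finset.range n, D (G (u i)) (G (u (i + 1))) ≤ varBy D G S :=
  le_iSup (fun p : {p : ℕ × (ℕ → ℝ) // Monotone p.2 ∧ ∀ i, p.2 i ∈ S} =>
    ∑ i ∈ Finset.range p.1.1, D (G (p.1.2 i)) (G (p.1.2 (i + 1)))) ⟨(n, u), hu, huS⟩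

noncomputable def vv (F : ℝ → Set M) (T : Set ℝ) (s t : ℝ) : ℝ≥0∞ := varPlus F (T ∩ Icc s t)

lemma vv_mono {F : ℝ → Set M} {T : Set ℝ} {s s' t t' : ℝ} (hs : s' ≤ s) (ht : t ≤ t') :
    vv F T s t ≤ vv F T s' t' :=
  varBy_mono _ _ (inter_subset_inter_right _ (Icc_subset_Icc hs ht))

lemma vv_le_varPlus (F : ℝ → Set M) (T : Set ℝ) (s t : ℝ) : vv F T s t ≤ varPlus F T :=
  varBy_mono _ _ inter_subset_left

lemma exc_le_vv {F : ℝ → Set M} {T : Set ℝ} {s t : ℝ} (hs : s ∈ T) (ht : t ∈ T) (hst : s ≤ t) :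
    exc (F s) (F t) ≤ vv F T s t := by
  have h := sum_le_varBy (S := T ∩ Icc s t) (n := 1) (u := fun i => if i = 0 then s else t)
    exc F (fun i j hij => by by_cases hi : i = 0 <;> by_cases hj : j = 0 <;>
      simp_all [le_refl] <;> omega)
    (fun i => by by_cases hi : i = 0 <;> simp [hi, hs, ht, hst, le_refl])
  simpa [vv, varPlus] using h

lemma vv_self (F : ℝ → Set M) (T : Set ℝ) (t : ℝ) : vv F T t t = 0 := by
  refine le_antisymm (iSup_le fun p => le_of_eq (Finset.sum_eq_zero fun i _ => ?_)) zero_le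
  have h1 : p.1.2 i = t := le_antisymm (p.2.2 i).2.2 (p.2.2 i).2.1
  have h2 : p.1.2 (i + 1) = t := le_antisymm (p.2.2 (i + 1)).2.2 (p.2.2 (i + 1)).2.1
  simp only [h1, h2, exc_self]

lemma vv_superadd {F : ℝ → Set M} {T : Set ℝ} {p q r : ℝ} (hpq : p ≤ q) (hqr : q ≤ r) :
    vv F T p q + vv F T q r ≤ vv F T p r := by
  classical
  rcases isEmpty_or_nonempty {pp : ℕ × (ℕ → ℝ) // Monotone pp.2 ∧ ∀ i, pp.2 i ∈ T ∩ Icc p q} with h1 | h1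
  · rw [show vv F T p q = 0 from le_antisymm (by simp only [vv, varPlus, varBy]; exact le_of_eq (iSup_of_empty _)) zero_le, zero_add]
    exact vv_mono hpq le_rfl
  rcases isEmpty_or_nonempty {pp : ℕ × (ℕ → ℝ) // Monotone pp.2 ∧ ∀ i, pp.2 i ∈ T ∩ Icc q r} with h2 | h2
  · rw [show vv F T q r = 0 from le_antisymm (by simp only [vv, varPlus, varBy]; exact le_of_eq (iSup_of_empty _)) zero_le, add_zero]
    exact vv_mono le_rfl hqr
  simp only [vv, varPlus, varBy]
  rw [ENNReal.iSup_add]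
  refine iSup_le fun p1 => ?_
  rw [ENNReal.add_iSup]
  refine iSup_le fun p2 => ?_
  obtain ⟨⟨n₁, u⟩, hu, huS⟩ := p1
  obtain ⟨⟨n₂, w⟩, hw, hwS⟩ := p2
  set seq : ℕ → ℝ := fun i => if i ≤ n₁ then u i else w (i - (n₁ + 1)) with hseq
  have hmem : ∀ i, seq i ∈ T ∩ Icc p r := by
    intro i
    by_cases hi : i ≤ n₁ <;> simp only [hseq, hi, if_true, if_false]
    · exact ⟨(huS i).1, (huS i).2.1, le_trans (huS i).2.2 hqr⟩
    · exact ⟨(hwS _).1, le_trans hpq (hwS _).2.1, (hwS _).2.2⟩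
  have hmono : Monotone seq := by
    intro i j hij
    by_cases hi : i ≤ n₁ <;> by_cases hj : j ≤ n₁ <;> simp only [hseq, hi, hj, if_true, if_false]
    · exact hu hij
    · exact le_trans (huS i).2.2 (hwS _).2.1
    · omega
    · exact hw (by omega)
  have hsum := sum_le_varBy (S := T ∩ Icc p r) (n := n₁ + (1 + n₂)) exc F hmono hmem
  refine le_trans ?_ hsum
  rw [Finset.sum_range_add, Finset.sum_range_add]
  have e1 : ∀ i ∈ Finset.range n₁,
      exc (F (u i)) (F (u (i+1))) = exc (F (seq i)) (F (seq (i+1))) := by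
    intro i hi
    simp only [Finset.mem_range] at hi
    simp only [hseq, (by omega : i ≤ n₁), (by omega : i + 1 ≤ n₁), if_true]
  have e2 : ∀ i ∈ Finset.range n₂,
      exc (F (w i)) (F (w (i+1))) = exc (F (seq (n₁ + (1 + i)))) (F (seq (n₁ + (1 + i) + 1))) := by
    intro i hi
    have a1 : ¬ (n₁ + (1 + i) ≤ n₁) := by omega
    have a2 : ¬ (n₁ + (1 + i) + 1 ≤ n₁) := by omega
    have b1 : n₁ + (1 + i) - (n₁ + 1) = i := by omega
    have b2 : n₁ + (1 + i) + 1 - (n₁ + 1) = i + 1 := by omega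
    simp only [hseq, a1, a2, if_false, b1, b2]
  rw [Finset.sum_congr rfl e1]
  refine add_le_add_right ?_ _
  rw [Finset.sum_congr rfl e2]
  exact le_add_self
end Basic

section Stage
variable {M : Type*} [MetricSpace M]

noncomputable def stage (F : ℝ → Set M) (T : Set ℝ) (b : ℝ) (X : Set M) : List ℝ → Set M
  | [] => F b ∩ {y | EMetric.infEdist y X ≤ exc X (F b)}
  | t :: l => F t ∩ {y | EMetric.infEdist y (stage F T b X l) ≤ vv F T (l.headD b) t}

def valid (T : Set ℝ) (b : ℝ) (l : List ℝ) : Prop :=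
  l.Pairwise (· > ·) ∧ ∀ r ∈ l, r ∈ T ∧ b ≤ r

variable {F : ℝ → Set M} {T : Set ℝ} {b : ℝ} {X : Set M}

lemma valid_tail {t : ℝ} {l : List ℝ} (h : valid T b (t :: l)) : valid T b l :=
  ⟨h.1.of_cons, fun r hr => h.2 r (List.mem_cons_of_mem _ hr)⟩

lemma valid_head {t : ℝ} {l : List ℝ} (h : valid T b (t :: l)) : t ∈ T ∧ b ≤ t :=
  h.2 t (List.mem_cons_self)

lemma headD_mem (hb : b ∈ T) {l : List ℝ} (h : valid T b l) : l.headD b ∈ T ∧ b ≤ l.headD b := by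
  cases l with
  | nil => exact ⟨hb, le_rfl⟩
  | cons t l => exact valid_head h

lemma headD_le_of_valid_cons {t : ℝ} {l : List ℝ} (h : valid T b (t :: l)) : l.headD b ≤ t := by
  cases l with
  | nil => exact (valid_head h).2
  | cons r m => exact (List.rel_of_pairwise_cons h.1 (List.mem_cons_self)).le

lemma valid_sublist {l l' : List ℝ} (hsub : List.Sublist l l') (h : valid T b l') :
    valid T b l :=
  ⟨h.1.sublist hsub, fun r hr => h.2 r (hsub.subset hr)⟩

lemma headD_le_headD_of_sublist {l l' : List ℝ} (hsub : List.Sublist l l') (h : valid T b l)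
    (h' : valid T b l') : l.headD b ≤ l'.headD b := by
  cases l with
  | nil =>
    cases l' with
    | nil => exact le_rfl
    | cons c m => exact (valid_head h').2
  | cons a m =>
    have ha : a ∈ l' := hsub.subset (List.mem_cons_self)
    cases l' with
    | nil => simp at ha
    | cons c m' =>
      rcases List.mem_cons.mp ha with rfl | ha'
      · exact le_rfl
      · exact (List.rel_of_pairwise_cons h'.1 ha').le

lemma stage_subset (l : List ℝ) : stage F T b X l ⊆ F (l.headD b) := by
  cases l with
  | nil => exact Set.inter_subset_left
  | cons t l => exact Set.inter_subset_left

lemma stage_closed (hF : ∀ t ∈ T, (F t).Nonempty ∧ IsCompact (F t)) (hb : b ∈ T)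
    {l : List ℝ} (h : valid T b l) : IsClosed (stage F T b X l) := by
  have hcl : IsClosed (F (l.headD b)) := ((hF _ (headD_mem hb h).1).2).isClosed
  cases l with
  | nil =>
    exact hcl.inter (isClosed_le (EMetric.continuous_infEdist) continuous_const)
  | cons t l =>
    exact hcl.inter (isClosed_le (EMetric.continuous_infEdist) continuous_const)

lemma stage_compact (hF : ∀ t ∈ T, (F t).Nonempty ∧ IsCompact (F t)) (hb : b ∈ T)
    {l : List ℝ} (h : valid T b l) : IsCompact (stage F T b X l) :=
  IsCompact.of_isClosed_subset (hF _ (headD_mem hb h).1).2 (stage_closed hF hb h)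
    (stage_subset l)

lemma stage_forward (hF : ∀ t ∈ T, (F t).Nonempty ∧ IsCompact (F t)) (hb : b ∈ T)
    {l : List ℝ} (h : valid T b l) {t : ℝ} (ht : t ∈ T) (hlt : l.headD b ≤ t) :
    ∀ y ∈ stage F T b X l, ∃ z ∈ stage F T b X (t :: l), edist y z ≤ vv F T (l.headD b) t := by
  intro y hy
  have hyF : y ∈ F (l.headD b) := stage_subset l hy
  have h1 : EMetric.infEdist y (F t) ≤ vv F T (l.headD b) t :=
    le_trans (le_exc hyF) (exc_le_vv (headD_mem hb h).1 ht hlt)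
  obtain ⟨z, hz, hez⟩ := (hF t ht).2.exists_infEdist_eq_edist (hF t ht).1 y
  refine ⟨z, ⟨hz, ?_⟩, by rw [← hez]; exact h1⟩
  exact le_trans (EMetric.infEdist_le_edist_of_mem hy) (le_trans (edist_comm z y ▸ le_of_eq hez.symm) h1)

lemma stage_nonempty (hF : ∀ t ∈ T, (F t).Nonempty ∧ IsCompact (F t)) (hb : b ∈ T)
    (hX : X.Nonempty) {l : List ℝ} (h : valid T b l) : (stage F T b X l).Nonempty := by
  induction l with
  | nil =>
    obtain ⟨x, hx⟩ := hX
    obtain ⟨y, hy, hey⟩ := (hF b hb).2.exists_infEdist_eq_edist (hF b hb).1 x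
    refine ⟨y, hy, ?_⟩
    calc EMetric.infEdist y X ≤ edist y x := EMetric.infEdist_le_edist_of_mem hx
    _ = EMetric.infEdist x (F b) := by rw [edist_comm, ← hey]; rfl
    _ ≤ exc X (F b) := le_exc hx
  | cons t l ih =>
    obtain ⟨y, hy⟩ := ih (valid_tail h)
    obtain ⟨z, hz, _⟩ := stage_forward hF hb (valid_tail h) (valid_head h).1
      (headD_le_of_valid_cons h) y hy
    exact ⟨z, hz⟩

lemma stage_sublist_excess (hF : ∀ t ∈ T, (F t).Nonempty ∧ IsCompact (F t)) (hb : b ∈ T)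
    (hX : X.Nonempty) {l l' : List ℝ} (hsub : List.Sublist l l') :
    valid T b l → valid T b l' →
    ∀ y ∈ stage F T b X l', EMetric.infEdist y (stage F T b X l) ≤
      vv F T (l.headD b) (l'.headD b) := by
  induction hsub with
  | slnil =>
    intro _ _ y hy
    simp [EMetric.infEdist, EMetric.infEdist_zero_of_mem hy]
  | @cons l₁ l₂ a h ih =>
    intro h1 h2 y hy
    obtain ⟨hyF, hyd⟩ := hy
    have h2' := valid_tail h2
    obtain ⟨z, hz, hez⟩ := (stage_compact hF hb h2').exists_infEdist_eq_edist
      (stage_nonempty hF hb hX h2') y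
    have hle1 : l₁.headD b ≤ l₂.headD b := headD_le_headD_of_sublist h h1 h2'
    have hle2 : l₂.headD b ≤ a := headD_le_of_valid_cons h2
    calc EMetric.infEdist y (stage F T b X l₁)
        ≤ edist y z + EMetric.infEdist z (stage F T b X l₁) :=
          EMetric.infEdist_le_edist_add_infEdist
      _ ≤ vv F T (l₂.headD b) a + vv F T (l₁.headD b) (l₂.headD b) :=
          add_le_add (by rw [← hez]; exact hyd) (ih h1 h2' z hz)
      _ = vv F T (l₁.headD b) (l₂.headD b) + vv F T (l₂.headD b) a := add_comm _ _
      _ ≤ vv F T (l₁.headD b) a := vv_superadd hle1 hle2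
  | @cons_cons l₁ l₂ a h ih =>
    intro h1 h2 y hy
    obtain ⟨hyF, hyd⟩ := hy
    have h1' := valid_tail h1
    have h2' := valid_tail h2
    obtain ⟨z, hz, hez⟩ := (stage_compact hF hb h2').exists_infEdist_eq_edist
      (stage_nonempty hF hb hX h2') y
    have hle1 : l₁.headD b ≤ l₂.headD b := headD_le_headD_of_sublist h h1' h2'
    have hle2 : l₂.headD b ≤ a := headD_le_of_valid_cons h2
    have key : EMetric.infEdist y (stage F T b X l₁) ≤ vv F T (l₁.headD b) a := by
      calc EMetric.infEdist y (stage F T b X l₁)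
          ≤ edist y z + EMetric.infEdist z (stage F T b X l₁) :=
            EMetric.infEdist_le_edist_add_infEdist
        _ ≤ vv F T (l₂.headD b) a + vv F T (l₁.headD b) (l₂.headD b) :=
            add_le_add (by rw [← hez]; exact hyd) (ih h1' h2' z hz)
        _ = vv F T (l₁.headD b) (l₂.headD b) + vv F T (l₂.headD b) a := add_comm _ _
        _ ≤ vv F T (l₁.headD b) a := vv_superadd hle1 hle2
    have : y ∈ stage F T b X (a :: l₁) := ⟨hyF, key⟩
    simp [EMetric.infEdist, EMetric.infEdist_zero_of_mem this]

lemma stage_antitone (hF : ∀ t ∈ T, (F t).Nonempty ∧ IsCompact (F t)) (hb : b ∈ T)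
    (hX : X.Nonempty) {t : ℝ} {l l' : List ℝ} (hsub : List.Sublist l l') (h1 : valid T b (t :: l))
    (h2 : valid T b (t :: l')) : stage F T b X (t :: l') ⊆ stage F T b X (t :: l) := by
  intro y hy
  obtain ⟨hyF, hyd⟩ := hy
  have h1' := valid_tail h1
  have h2' := valid_tail h2
  obtain ⟨z, hz, hez⟩ := (stage_compact hF hb h2').exists_infEdist_eq_edist
    (stage_nonempty hF hb hX h2') y
  refine ⟨hyF, ?_⟩
  calc EMetric.infEdist y (stage F T b X l)
      ≤ edist y z + EMetric.infEdist z (stage F T b X l) :=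
        EMetric.infEdist_le_edist_add_infEdist
    _ ≤ vv F T (l'.headD b) t + vv F T (l.headD b) (l'.headD b) :=
        add_le_add (by rw [← hez]; exact hyd)
          (stage_sublist_excess hF hb hX hsub h1' h2' z hz)
    _ = vv F T (l.headD b) (l'.headD b) + vv F T (l'.headD b) t := add_comm _ _
    _ ≤ vv F T (l.headD b) t :=
        vv_superadd (headD_le_headD_of_sublist hsub h1' h2') (headD_le_of_valid_cons h2)

lemma stage_forward_multi (hF : ∀ t ∈ T, (F t).Nonempty ∧ IsCompact (F t)) (hb : b ∈ T)
    (hX : X.Nonempty) (l₁ : List ℝ) {l : List ℝ} (hval : valid T b (l₁ ++ l)) :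
    ∀ y ∈ stage F T b X l, EMetric.infEdist y (stage F T b X (l₁ ++ l)) ≤
      vv F T (l.headD b) ((l₁ ++ l).headD b) := by
  induction l₁ with
  | nil =>
    intro y hy
    simp [EMetric.infEdist, EMetric.infEdist_zero_of_mem hy]
  | cons r l₁ ih =>
    intro y hy
    have hval' : valid T b (l₁ ++ l) := valid_tail hval
    have ih' := ih hval' y hy
    obtain ⟨w, hw, hew⟩ := (stage_compact hF hb hval').exists_infEdist_eq_edist
      (stage_nonempty hF hb hX hval') y
    obtain ⟨z, hz, hez⟩ := stage_forward hF hb hval' (valid_head hval).1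
      (headD_le_of_valid_cons hval) w hw
    have hle1 : l.headD b ≤ (l₁ ++ l).headD b :=
      headD_le_headD_of_sublist (List.sublist_append_right _ _)
        (valid_sublist (List.sublist_append_right _ _) hval') hval'
    calc EMetric.infEdist y (stage F T b X ((r :: l₁) ++ l))
        ≤ edist y z := EMetric.infEdist_le_edist_of_mem hz
      _ ≤ edist y w + edist w z := edist_triangle _ _ _
      _ ≤ vv F T (l.headD b) ((l₁ ++ l).headD b) + vv F T ((l₁ ++ l).headD b) r :=
          add_le_add (by rw [← hew]; exact ih') hez
      _ ≤ vv F T (l.headD b) r := vv_superadd hle1 (headD_le_of_valid_cons hval)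

end Stage

section Sel
variable {M : Type*} [MetricSpace M] {F : ℝ → Set M} {T : Set ℝ} {b : ℝ} {X : Set M}

lemma valid_nil : valid T b ([] : List ℝ) := ⟨List.Pairwise.nil, by simp⟩

lemma valid_single {t : ℝ} (ht : t ∈ T) (hbt : b ≤ t) : valid T b [t] :=
  ⟨List.pairwise_singleton _ _, fun r hr => by
    rw [List.mem_singleton] at hr; subst hr; exact ⟨ht, hbt⟩⟩

lemma valid_cons {t s : ℝ} {m : List ℝ} (h : valid T b (s :: m)) (ht : t ∈ T) (hbt : b ≤ t)
    (hst : s < t) : valid T b (t :: s :: m) := by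
  refine ⟨List.pairwise_cons.mpr ⟨fun r hr => ?_, h.1⟩, fun r hr => ?_⟩
  · rcases List.mem_cons.mp hr with rfl | hr'
    · exact hst
    · exact lt_trans (List.rel_of_pairwise_cons h.1 hr') hst
  · rcases List.mem_cons.mp hr with rfl | hr'
    · exact ⟨ht, hbt⟩
    · exact h.2 r hr'

lemma exists_merge {t : ℝ} {l₁ l₂ : List ℝ} (h1 : valid T b (t :: l₁))
    (h2 : valid T b (t :: l₂)) :
    ∃ m, valid T b (t :: m) ∧ List.Sublist l₁ m ∧ List.Sublist l₂ m := by
  classical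
  haveI : IsAntisymm ℝ (· ≥ ·) := ⟨fun a c h h' => le_antisymm h' h⟩
  set m := List.insertionSort (· ≥ ·) (l₁ ++ l₂).dedup with hm
  have hperm : List.Perm m (l₁ ++ l₂).dedup := List.perm_insertionSort _ _
  have hnodup : m.Nodup := hperm.nodup_iff.mpr (List.nodup_dedup _)
  have hsorted : List.Pairwise (· ≥ ·) m := List.pairwise_insertionSort _ _
  have hpw : m.Pairwise (· > ·) :=
    (hsorted.and hnodup).imp fun h => lt_of_le_of_ne h.1 h.2.symm
  have hmemm : ∀ r ∈ m, r ∈ l₁ ∨ r ∈ l₂ := fun r hr =>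
    List.mem_append.mp (List.mem_dedup.mp (hperm.subset hr))
  have hsub : ∀ l : List ℝ, valid T b (t :: l) → (∀ x ∈ l, x ∈ l₁ ++ l₂) →
      List.Sublist l m := by
    intro l hl hsubset
    refine List.sublist_of_subperm_of_pairwise (r := (· ≥ ·))
      (List.Nodup.subperm ((valid_tail hl).1.imp ne_of_gt) ?_)
      ((valid_tail hl).1.imp le_of_lt) hsorted
    intro x hx
    rw [hperm.mem_iff, List.mem_dedup]
    exact hsubset x hx
  refine ⟨m, ⟨List.pairwise_cons.mpr ⟨fun r hr => ?_, hpw⟩, fun r hr => ?_⟩,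
    hsub l₁ h1 (fun x hx => List.mem_append.mpr (Or.inl hx)),
    hsub l₂ h2 (fun x hx => List.mem_append.mpr (Or.inr hx))⟩
  · rcases hmemm r hr with h | h
    · exact List.rel_of_pairwise_cons h1.1 h
    · exact List.rel_of_pairwise_cons h2.1 h
  · rcases List.mem_cons.mp hr with rfl | hr'
    · exact h1.2 r (List.mem_cons_self)
    · rcases hmemm r hr' with h | h
      · exact h1.2 r (List.mem_cons_of_mem _ h)
      · exact h2.2 r (List.mem_cons_of_mem _ h)

noncomputable def sel (F : ℝ → Set M) (T : Set ℝ) (b : ℝ) (X : Set M) (t : ℝ) : Set M :=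
  ⋂ l : {l : List ℝ // valid T b (t :: l)}, stage F T b X (t :: l.1)

lemma mem_sel {t : ℝ} {y : M} :
    y ∈ sel F T b X t ↔ ∀ l : {l : List ℝ // valid T b (t :: l)}, y ∈ stage F T b X (t :: l.1) :=
  Set.mem_iInter

lemma sel_subset {t : ℝ} (ht : t ∈ T) (hbt : b ≤ t) : sel F T b X t ⊆ F t :=
  (Set.iInter_subset _ ⟨[], valid_single ht hbt⟩).trans (stage_subset _)

lemma sel_closed (hF : ∀ t ∈ T, (F t).Nonempty ∧ IsCompact (F t)) (hb : b ∈ T) {t : ℝ} :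
    IsClosed (sel F T b X t) :=
  isClosed_iInter fun l => stage_closed hF hb l.2

lemma sel_compact (hF : ∀ t ∈ T, (F t).Nonempty ∧ IsCompact (F t)) (hb : b ∈ T) {t : ℝ}
    (ht : t ∈ T) (hbt : b ≤ t) : IsCompact (sel F T b X t) :=
  IsCompact.of_isClosed_subset (hF t ht).2 (sel_closed hF hb) (sel_subset ht hbt)

lemma sel_nonempty (hF : ∀ t ∈ T, (F t).Nonempty ∧ IsCompact (F t)) (hb : b ∈ T)
    (hX : X.Nonempty) {t : ℝ} (ht : t ∈ T) (hbt : b ≤ t) : (sel F T b X t).Nonempty := by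
  haveI : Nonempty {l : List ℝ // valid T b (t :: l)} := ⟨⟨[], valid_single ht hbt⟩⟩
  refine IsCompact.nonempty_iInter_of_directed_nonempty_isCompact_isClosed _
    (fun l₁ l₂ => ?_) (fun l => stage_nonempty hF hb hX l.2)
    (fun l => stage_compact hF hb l.2) (fun l => stage_closed hF hb l.2)
  obtain ⟨m, hvm, hs1, hs2⟩ := exists_merge l₁.2 l₂.2
  exact ⟨⟨m, hvm⟩, stage_antitone hF hb hX hs1 l₁.2 hvm, stage_antitone hF hb hX hs2 l₂.2 hvm⟩

lemma sel_infEdist_of_mem_right (hF : ∀ t ∈ T, (F t).Nonempty ∧ IsCompact (F t)) (hb : b ∈ T)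
    (hX : X.Nonempty) {s t : ℝ} (hs : s ∈ T) (ht : t ∈ T) (hbs : b ≤ s) (hst : s ≤ t) :
    ∀ z ∈ sel F T b X t, EMetric.infEdist z (sel F T b X s) ≤ vv F T s t := by
  rcases eq_or_lt_of_le hst with rfl | hlt
  · exact fun z hz => by simp [EMetric.infEdist, EMetric.infEdist_zero_of_mem hz]
  intro z hz
  haveI : Nonempty {m : List ℝ // valid T b (s :: m)} := ⟨⟨[], valid_single hs hbs⟩⟩
  set K : {m : List ℝ // valid T b (s :: m)} → Set M := fun m =>
    stage F T b X (s :: m.1) ∩ {y | edist z y ≤ vv F T s t} with hK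
  have hKco : ∀ m, IsCompact (K m) := fun m =>
    (stage_compact hF hb m.2).inter_right
      (isClosed_le (continuous_const.edist continuous_id) continuous_const)
  have hKcl : ∀ m, IsClosed (K m) := fun m =>
    (stage_closed hF hb m.2).inter
      (isClosed_le (continuous_const.edist continuous_id) continuous_const)
  have hKne : ∀ m, (K m).Nonempty := by
    intro m
    have hvm : valid T b (t :: s :: m.1) := valid_cons m.2 ht (le_trans hbs hst) hlt
    have hzst := mem_sel.mp hz ⟨s :: m.1, hvm⟩
    obtain ⟨y, hy, hey⟩ := (stage_compact hF hb m.2).exists_infEdist_eq_edist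
      (stage_nonempty hF hb hX m.2) z
    exact ⟨y, hy, by rw [Set.mem_setOf_eq, ← hey]; exact hzst.2⟩
  have hdir : Directed (· ⊇ ·) K := by
    intro m₁ m₂
    obtain ⟨m, hvm, hs1, hs2⟩ := exists_merge m₁.2 m₂.2
    exact ⟨⟨m, hvm⟩,
      Set.inter_subset_inter_left _ (stage_antitone hF hb hX hs1 m₁.2 hvm),
      Set.inter_subset_inter_left _ (stage_antitone hF hb hX hs2 m₂.2 hvm)⟩
  obtain ⟨y, hy⟩ := IsCompact.nonempty_iInter_of_directed_nonempty_isCompact_isClosed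
    K hdir hKne hKco hKcl
  have hy1 : y ∈ sel F T b X s := mem_sel.mpr fun m => (Set.mem_iInter.mp hy m).1
  have hy2 : edist z y ≤ vv F T s t :=
    (Set.mem_iInter.mp hy ⟨[], valid_single hs hbs⟩).2
  exact le_trans (EMetric.infEdist_le_edist_of_mem hy1) hy2

lemma sel_infEdist_of_mem_left (hF : ∀ t ∈ T, (F t).Nonempty ∧ IsCompact (F t)) (hb : b ∈ T)
    (hX : X.Nonempty) {s t : ℝ} (hs : s ∈ T) (ht : t ∈ T) (hbs : b ≤ s) (hst : s ≤ t) :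
    ∀ y ∈ sel F T b X s, EMetric.infEdist y (sel F T b X t) ≤ vv F T s t := by
  rcases eq_or_lt_of_le hst with rfl | hlt
  · exact fun z hz => by simp [EMetric.infEdist, EMetric.infEdist_zero_of_mem hz]
  intro y hy
  haveI : Nonempty {l : List ℝ // valid T b (t :: l)} :=
    ⟨⟨[], valid_single ht (le_trans hbs hst)⟩⟩
  set K : {l : List ℝ // valid T b (t :: l)} → Set M := fun l =>
    stage F T b X (t :: l.1) ∩ {w | edist y w ≤ vv F T s t} with hK
  have hKco : ∀ l, IsCompact (K l) := fun l =>
    (stage_compact hF hb l.2).inter_right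
      (isClosed_le (continuous_const.edist continuous_id) continuous_const)
  have hKcl : ∀ l, IsClosed (K l) := fun l =>
    (stage_closed hF hb l.2).inter
      (isClosed_le (continuous_const.edist continuous_id) continuous_const)
  have hKne : ∀ l, (K l).Nonempty := by
    intro l
    have h2 : valid T b (t :: [s]) := valid_cons (valid_single hs hbs) ht (le_trans hbs hst) hlt
    obtain ⟨m, hvm, hsub1, hsub2⟩ := exists_merge l.2 h2
    have hsmem : s ∈ m := hsub2.subset (List.mem_singleton_self _)
    obtain ⟨m₁, m₂, hm⟩ := List.append_of_mem hsmem
    have hvm' : valid T b ((t :: m₁) ++ (s :: m₂)) := by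
      rw [List.cons_append, ← hm]; exact hvm
    have hvs : valid T b (s :: m₂) :=
      valid_sublist ((List.sublist_append_right m₁ (s :: m₂)).trans
        (by rw [← hm]; exact (List.sublist_cons_self t m).trans (List.Sublist.refl _))) hvm
    have hys : y ∈ stage F T b X (s :: m₂) := mem_sel.mp hy ⟨m₂, hvs⟩
    have hmulti := stage_forward_multi hF hb hX (t :: m₁) hvm' y hys
    have hhead : ((t :: m₁) ++ (s :: m₂)).headD b = t := rfl
    have hhead2 : (s :: m₂).headD b = s := rfl
    rw [hhead, hhead2] at hmulti
    have hvtm : valid T b (t :: m) := hvm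
    obtain ⟨w, hw, hew⟩ := (stage_compact hF hb hvtm).exists_infEdist_eq_edist
      (stage_nonempty hF hb hX hvtm) y
    have hwm : w ∈ stage F T b X (t :: m) := hw
    have hwl : w ∈ stage F T b X (t :: l.1) := stage_antitone hF hb hX hsub1 l.2 hvm hwm
    refine ⟨w, hwl, ?_⟩
    rw [Set.mem_setOf_eq, ← hew, hm]
    exact hmulti
  have hdir : Directed (· ⊇ ·) K := by
    intro l₁ l₂
    obtain ⟨m, hvm, hs1, hs2⟩ := exists_merge l₁.2 l₂.2
    exact ⟨⟨m, hvm⟩,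
      Set.inter_subset_inter_left _ (stage_antitone hF hb hX hs1 l₁.2 hvm),
      Set.inter_subset_inter_left _ (stage_antitone hF hb hX hs2 l₂.2 hvm)⟩
  obtain ⟨w, hw⟩ := IsCompact.nonempty_iInter_of_directed_nonempty_isCompact_isClosed
    K hdir hKne hKco hKcl
  have hw1 : w ∈ sel F T b X t := mem_sel.mpr fun l => (Set.mem_iInter.mp hw l).1
  have hw2 : edist y w ≤ vv F T s t :=
    (Set.mem_iInter.mp hw ⟨[], valid_single ht (le_trans hbs hst)⟩).2
  exact le_trans (EMetric.infEdist_le_edist_of_mem hw1) hw2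

lemma sel_hausdorffEdist_le (hF : ∀ t ∈ T, (F t).Nonempty ∧ IsCompact (F t)) (hb : b ∈ T)
    (hX : X.Nonempty) {s t : ℝ} (hs : s ∈ T) (ht : t ∈ T) (hbs : b ≤ s) (hst : s ≤ t) :
    EMetric.hausdorffEdist (sel F T b X s) (sel F T b X t) ≤ vv F T s t :=
  EMetric.hausdorffEdist_le_of_infEdist
    (sel_infEdist_of_mem_left hF hb hX hs ht hbs hst)
    (sel_infEdist_of_mem_right hF hb hX hs ht hbs hst)

lemma sel_base (hF : ∀ t ∈ T, (F t).Nonempty ∧ IsCompact (F t)) (hb : b ∈ T) :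
    sel F T b X b = stage F T b X [] := by
  apply Set.Subset.antisymm
  · intro y hy
    have hy0 := mem_sel.mp hy ⟨[], valid_single hb le_rfl⟩
    obtain ⟨hyF, hyd⟩ := hy0
    rw [Set.mem_setOf_eq, List.headD_nil, vv_self, le_zero_iff] at hyd
    have : y ∈ closure (stage F T b X []) := EMetric.mem_closure_iff_infEdist_zero.mpr hyd
    rwa [(stage_closed hF hb valid_nil).closure_eq] at this
  · intro y hy
    refine mem_sel.mpr fun l => ?_
    have hl : l.1 = [] := by
      cases hl1 : l.1 with
      | nil => rfl
      | cons r m =>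
        exfalso
        have h := l.2
        rw [hl1] at h
        have h1 : b > r := List.rel_of_pairwise_cons h.1 (List.mem_cons_self)
        have h2 : b ≤ r := (h.2 r (List.mem_cons_of_mem _ (List.mem_cons_self))).2
        exact absurd h1 (not_lt.mpr h2)
    have : y ∈ stage F T b X (b :: []) :=
      ⟨stage_subset [] hy, by simp [EMetric.infEdist, EMetric.infEdist_zero_of_mem hy]⟩
    simpa [hl] using this

lemma sel_base_haus (hF : ∀ t ∈ T, (F t).Nonempty ∧ IsCompact (F t)) (hb : b ∈ T) :
    EMetric.hausdorffEdist X (sel F T b X b) ≤ exc X (F b) := by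
  rw [sel_base hF hb]
  refine EMetric.hausdorffEdist_le_of_infEdist (fun x hx => ?_) (fun y hy => hy.2)
  obtain ⟨y, hy, hey⟩ := (hF b hb).2.exists_infEdist_eq_edist (hF b hb).1 x
  have h1 : edist x y ≤ exc X (F b) := by rw [← hey]; exact le_exc hx
  refine le_trans (EMetric.infEdist_le_edist_of_mem ⟨hy, ?_⟩) h1
  exact le_trans (EMetric.infEdist_le_edist_of_mem hx) (le_trans (le_of_eq (edist_comm y x)) h1)

lemma sel_base_eq (hF : ∀ t ∈ T, (F t).Nonempty ∧ IsCompact (F t)) (hb : b ∈ T)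
    (hXc : IsCompact X) (hsub : X ⊆ F b) : sel F T b X b = X := by
  rw [sel_base hF hb]
  have hE : exc X (F b) = 0 :=
    le_antisymm (iSup₂_le fun x hx => le_of_eq (EMetric.infEdist_zero_of_mem (hsub hx)))
      zero_le
  ext y
  constructor
  · rintro ⟨hyF, hyd⟩
    rw [Set.mem_setOf_eq, hE, le_zero_iff] at hyd
    have : y ∈ closure X := EMetric.mem_closure_iff_infEdist_zero.mpr hyd
    rwa [hXc.isClosed.closure_eq] at this
  · intro hy
    exact ⟨hsub hy, by simp [EMetric.infEdist, EMetric.infEdist_zero_of_mem hy]⟩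

end Sel

section Assembly
variable {M : Type*} [MetricSpace M]

lemma sum_vv_le {F : ℝ → Set M} {T : Set ℝ} {u : ℕ → ℝ} (hu : Monotone u) (n : ℕ) :
    ∑ i ∈ Finset.range n, vv F T (u i) (u (i + 1)) ≤ vv F T (u 0) (u n) := by
  induction n with
  | zero => simp
  | succ n ih =>
    rw [Finset.sum_range_succ]
    exact le_trans (add_le_add ih le_rfl) (vv_superadd (hu (Nat.zero_le n)) (hu (Nat.le_succ n)))

lemma varH_piece_le {G F : ℝ → Set M} {T S : Set ℝ}
    (hd : ∀ s t, s ∈ S → t ∈ S → s ≤ t →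
      EMetric.hausdorffEdist (G s) (G t) ≤ vv F T s t)
    (hsub : ∀ s t, s ∈ S → t ∈ S → T ∩ Icc s t ⊆ S) :
    varH G S ≤ varPlus F S := by
  refine iSup_le fun p => ?_
  obtain ⟨⟨n, u⟩, hu, huS⟩ := p
  calc ∑ i ∈ Finset.range n, EMetric.hausdorffEdist (G (u i)) (G (u (i + 1)))
      ≤ ∑ i ∈ Finset.range n, vv F T (u i) (u (i + 1)) :=
        Finset.sum_le_sum fun i _ => hd _ _ (huS i) (huS (i + 1)) (hu (Nat.le_succ i))
    _ ≤ vv F T (u 0) (u n) := sum_vv_le hu n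
    _ ≤ varPlus F S := varBy_mono _ _ (hsub _ _ (huS 0) (huS n))

lemma varBy_split (D : Set M → Set M → ℝ≥0∞) (G : ℝ → Set M) (T S₁ S₂ : Set ℝ) (c : ℝ)
    (B : ℝ≥0∞) (hS₁ : ∀ t ∈ T, t < c → t ∈ S₁) (hS₂ : ∀ t ∈ T, c ≤ t → t ∈ S₂)
    (hcross : ∀ s t, s ∈ T → t ∈ T → s < c → c ≤ t → D (G s) (G t) ≤ B) :
    varBy D G T ≤ varBy D G S₁ + (B + varBy D G S₂) := by
  refine iSup_le fun p => ?_
  obtain ⟨⟨n, u⟩, hu, huT⟩ := p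
  dsimp only at hu huT ⊢
  by_cases hn : u n < c
  · have h1 : ∀ i, u (min i n) ∈ S₁ := fun i =>
      hS₁ _ (huT _) (lt_of_le_of_lt (hu (min_le_right i n)) hn)
    have hsum := sum_le_varBy D G (S := S₁) (n := n) (u := fun i => u (min i n))
      (hu.comp fun i j h => min_le_min h le_rfl) h1
    refine le_trans (le_of_eq (Finset.sum_congr rfl fun i hi => ?_)) (le_trans hsum le_self_add)
    rw [Finset.mem_range] at hi
    simp only [min_eq_left (show i ≤ n by omega), min_eq_left (show i + 1 ≤ n by omega)]
  by_cases h0 : c ≤ u 0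
  · have h2 : ∀ i, u i ∈ S₂ := fun i => hS₂ _ (huT _) (le_trans h0 (hu (Nat.zero_le i)))
    have hsum := sum_le_varBy D G (S := S₂) (n := n) (u := u) hu h2
    exact le_trans hsum (le_trans le_add_self le_add_self)
  · have hex : ∃ i, c ≤ u i := ⟨n, not_lt.mp hn⟩
    set k := Nat.find hex with hkdef
    have hk : c ≤ u k := Nat.find_spec hex
    have hklt : ∀ j, j < k → u j < c := fun j hj => not_le.mp (Nat.find_min hex hj)
    have hk1 : 1 ≤ k := by
      rcases Nat.eq_zero_or_pos k with h | h
      · exact absurd (h ▸ hk) h0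
      · exact h
    have hkn : k ≤ n := Nat.find_min' hex (not_lt.mp hn)
    have hsplit : n = (k - 1) + (1 + (n - k)) := by omega
    rw [hsplit, Finset.sum_range_add, Finset.sum_range_add]
    refine add_le_add ?_ (add_le_add ?_ ?_)
    · have h1 : ∀ i, u (min i (k - 1)) ∈ S₁ := fun i =>
        hS₁ _ (huT _) (hklt _ (by omega))
      have hsum := sum_le_varBy D G (S := S₁) (n := k - 1) (u := fun i => u (min i (k - 1)))
        (hu.comp fun i j h => min_le_min h le_rfl) h1
      refine le_trans (le_of_eq (Finset.sum_congr rfl fun i hi => ?_)) hsum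
      rw [Finset.mem_range] at hi
      simp only [min_eq_left (show i ≤ k - 1 by omega),
        min_eq_left (show i + 1 ≤ k - 1 by omega)]
    · rw [Finset.sum_range_one]
      have e1 : k - 1 + 0 = k - 1 := by omega
      have e2 : k - 1 + 1 = k := by omega
      rw [e1, e2]
      exact hcross _ _ (huT _) (huT _) (hklt _ (by omega)) hk
    · have h2 : ∀ j, u (k + j) ∈ S₂ := fun j =>
        hS₂ _ (huT _) (le_trans hk (hu (Nat.le_add_right k j)))
      have hsum := sum_le_varBy D G (S := S₂) (n := n - k) (u := fun j => u (k + j))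
        (hu.comp fun i j h => by omega) h2
      refine le_trans (le_of_eq (Finset.sum_congr rfl fun j hj => ?_)) hsum
      have e1 : k - 1 + (1 + j) = k + j := by omega
      rw [e1]
      rfl

end Assembly

/-- Main selector theorem (Theorem 1(a)): if a = inf T ∈ T and V⁺(F,T) < ∞, then F admits
a compact-valued selector Γ of bounded variation with the stated estimates. -/
theorem exists_selector_of_varPlus_lt_top {M : Type*} [MetricSpace M]
    (T : Set ℝ) (hTbdd : BddBelow T) (ha : sInf T ∈ T)
    (F : ℝ → Set M) (hF : ∀ t ∈ T, (F t).Nonempty ∧ IsCompact (F t))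
    (hV : varPlus F T < ⊤)
    (t₀ : ℝ) (ht₀ : t₀ ∈ T) (X₀ : Set M) (hX₀ : X₀.Nonempty) (hX₀c : IsCompact X₀) :
    ∃ Γ : ℝ → Set M,
      (∀ t ∈ T, (Γ t).Nonempty ∧ IsCompact (Γ t) ∧ Γ t ⊆ F t) ∧
      varH Γ T < ⊤ ∧
      EMetric.hausdorffEdist X₀ (Γ t₀) ≤ exc X₀ (F t₀) ∧
      varH Γ (T ∩ Set.Ico (sInf T) t₀) ≤ varPlus F (T ∩ Set.Ico (sInf T) t₀) ∧
      varH Γ (T ∩ Set.Ici t₀) ≤ varPlus F (T ∩ Set.Ici t₀) ∧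
      (X₀ ⊆ F t₀ → Γ t₀ = X₀) := by
  classical
  set a := sInf T with ha_def
  have hle : ∀ t ∈ T, a ≤ t := fun t ht => csInf_le hTbdd ht
  have hFa := hF a ha
  set Γ : ℝ → Set M := fun t =>
    if t ∈ T then (if t < t₀ then sel F T a (F a) t else sel F T t₀ X₀ t) else X₀ with hΓdef
  have hΓpast : ∀ t ∈ T, t < t₀ → Γ t = sel F T a (F a) t := by
    intro t ht hlt; simp only [hΓdef, if_pos ht, if_pos hlt]
  have hΓfut : ∀ t ∈ T, t₀ ≤ t → Γ t = sel F T t₀ X₀ t := by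
    intro t ht hge; simp only [hΓdef, if_pos ht, if_neg (not_lt.mpr hge)]
  have hΓt₀ : Γ t₀ = sel F T t₀ X₀ t₀ := hΓfut t₀ ht₀ le_rfl
  -- piece bounds
  have hpast : varH Γ (T ∩ Set.Ico a t₀) ≤ varPlus F (T ∩ Set.Ico a t₀) := by
    refine varH_piece_le (F := F) (T := T) (fun s t hs ht hst => ?_) (fun s t hs ht => ?_)
    · rw [hΓpast s hs.1 hs.2.2, hΓpast t ht.1 ht.2.2]
      exact sel_hausdorffEdist_le hF ha hFa.1 hs.1 ht.1 hs.2.1 hst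
    · rintro x ⟨hxT, hx1, hx2⟩
      exact ⟨hxT, le_trans hs.2.1 hx1, lt_of_le_of_lt hx2 ht.2.2⟩
  have hfut : varH Γ (T ∩ Set.Ici t₀) ≤ varPlus F (T ∩ Set.Ici t₀) := by
    refine varH_piece_le (F := F) (T := T) (fun s t hs ht hst => ?_) (fun s t hs ht => ?_)
    · rw [hΓfut s hs.1 hs.2, hΓfut t ht.1 ht.2]
      exact sel_hausdorffEdist_le hF ht₀ hX₀ hs.1 ht.1 hs.2 hst
    · rintro x ⟨hxT, hx1, _⟩
      exact ⟨hxT, le_trans hs.2 hx1⟩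
  have hPa : sel F T a (F a) a = F a := sel_base_eq hF ha hFa.2 (subset_refl _)
  have hDaX : EMetric.hausdorffEdist (F a) X₀ ≠ ⊤ :=
    Metric.hausdorffEdist_ne_top_of_nonempty_of_bounded hFa.1 hX₀ hFa.2.isBounded
      hX₀c.isBounded
  have hexcfin : exc X₀ (F t₀) ≠ ⊤ := by
    refine ne_top_of_le_ne_top ?_ (exc_le_hausdorffEdist X₀ (F t₀))
    exact Metric.hausdorffEdist_ne_top_of_nonempty_of_bounded hX₀ (hF t₀ ht₀).1
      hX₀c.isBounded (hF t₀ ht₀).2.isBounded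
  set B : ℝ≥0∞ := varPlus F T +
    (EMetric.hausdorffEdist (F a) X₀ + (exc X₀ (F t₀) + varPlus F T)) with hBdef
  have hBfin : B < ⊤ := by
    rw [hBdef]
    refine ENNReal.add_lt_top.mpr ⟨hV, ENNReal.add_lt_top.mpr ⟨lt_top_iff_ne_top.mpr hDaX,
      ENNReal.add_lt_top.mpr ⟨lt_top_iff_ne_top.mpr hexcfin, hV⟩⟩⟩
  have hcross : ∀ s t, s ∈ T → t ∈ T → s < t₀ → t₀ ≤ t →
      EMetric.hausdorffEdist (Γ s) (Γ t) ≤ B := by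
    intro s t hs ht hslt htge
    rw [hΓpast s hs hslt, hΓfut t ht htge]
    have trig : EMetric.hausdorffEdist (sel F T a (F a) s) (sel F T t₀ X₀ t) ≤
        EMetric.hausdorffEdist (sel F T a (F a) s) (F a) +
          (EMetric.hausdorffEdist (F a) X₀ +
            (EMetric.hausdorffEdist X₀ (sel F T t₀ X₀ t₀) +
              EMetric.hausdorffEdist (sel F T t₀ X₀ t₀) (sel F T t₀ X₀ t))) := by
      calc EMetric.hausdorffEdist (sel F T a (F a) s) (sel F T t₀ X₀ t)
          ≤ EMetric.hausdorffEdist (sel F T a (F a) s) (F a) +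
            EMetric.hausdorffEdist (F a) (sel F T t₀ X₀ t) :=
            EMetric.hausdorffEdist_triangle
        _ ≤ EMetric.hausdorffEdist (sel F T a (F a) s) (F a) +
            (EMetric.hausdorffEdist (F a) X₀ +
              EMetric.hausdorffEdist X₀ (sel F T t₀ X₀ t)) :=
            add_le_add_right EMetric.hausdorffEdist_triangle _
        _ ≤ _ := by
            refine add_le_add_right (add_le_add_right ?_ _) _
            exact EMetric.hausdorffEdist_triangle
    refine le_trans trig ?_
    rw [hBdef]
    refine add_le_add ?_ (add_le_add le_rfl (add_le_add ?_ ?_))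
    · have h1 := le_trans (sel_hausdorffEdist_le hF ha hFa.1 ha hs le_rfl (hle s hs))
        (vv_le_varPlus F T a s)
      rw [hPa, EMetric.hausdorffEdist, hausdorffEDist_comm] at h1
      exact h1
    · exact sel_base_haus hF ht₀
    · exact le_trans (sel_hausdorffEdist_le hF ht₀ hX₀ ht₀ ht le_rfl htge)
        (vv_le_varPlus F T t₀ t)
  have htotal : varH Γ T < ⊤ := by
    have hsplit := varBy_split EMetric.hausdorffEdist Γ T (T ∩ Set.Ico a t₀)
      (T ∩ Set.Ici t₀) t₀ B (fun t ht hlt => ⟨ht, hle t ht, hlt⟩)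
      (fun t ht hge => ⟨ht, hge⟩) hcross
    refine lt_of_le_of_lt hsplit ?_
    refine ENNReal.add_lt_top.mpr ⟨?_, ENNReal.add_lt_top.mpr ⟨hBfin, ?_⟩⟩
    · exact lt_of_le_of_lt (le_trans hpast (varBy_mono _ _ Set.inter_subset_left)) hV
    · exact lt_of_le_of_lt (le_trans hfut (varBy_mono _ _ Set.inter_subset_left)) hV
  refine ⟨Γ, ?_, htotal, ?_, hpast, hfut, ?_⟩
  · intro t ht
    by_cases hlt : t < t₀
    · rw [hΓpast t ht hlt]
      exact ⟨sel_nonempty hF ha hFa.1 ht (hle t ht),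
        sel_compact hF ha ht (hle t ht), sel_subset ht (hle t ht)⟩
    · rw [hΓfut t ht (not_lt.mp hlt)]
      exact ⟨sel_nonempty hF ht₀ hX₀ ht (not_lt.mp hlt),
        sel_compact hF ht₀ ht (not_lt.mp hlt), sel_subset ht (not_lt.mp hlt)⟩
  · rw [hΓt₀]
    exact sel_base_haus hF ht₀
  · intro hsub
    rw [hΓt₀]
    exact sel_base_eq hF ht₀ hX₀c hsub
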